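/- Let T be a monad on a category C, x an object of C with a T-algebra structure m : Tx → x, and T̃ the induced lifted monad on C/x (sending f : y → x to m ∘ T(f) : Ty → x). Then the category of T̃-algebras in C/x is equivalent to the slice category of T-algebras over the T-algebra (x, m): Alg(T̃) ≃ Alg(T)/(x,m). -/

import Mathlib

open CategoryTheory

universe v u

variable {C : Type u} [Category.{v} C]

/-- The lift to the slice category `C/x` of the endofunctor of a monad `T`
associated to an algebra structure `m : T x ⟶ x`: it sends `(f : y → x)` to
`(m ∘ T f : T y → x)`. -/
@[simps]
def liftOfFunctor (T : Monad C) {x : C} (m : (T : C ⥤ C).obj x ⟶ x) : Over x ⥤ Over x where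
  obj f := Over.mk ((T : C ⥤ C).map f.hom ≫ m)
  map {f g} u := Over.homMk ((T : C ⥤ C).map u.left) (by
    dsimp
    rw [← Category.assoc, ← Functor.map_comp, Over.w])

/-- The lifted monad `T̃` on `C/x` induced by a `T`-algebra structure `m : T x ⟶ x`,
sending `(f : y → x)` to `(m ∘ T f : T y → x)`, with unit and multiplication
inherited from `T`. -/
def liftedMonad (T : Monad C) {x : C} (m : (T : C ⥤ C).obj x ⟶ x)
    (h1 : T.η.app x ≫ m = 𝟙 x)
    (h2 : T.μ.app x ≫ m = (T : C ⥤ C).map m ≫ m) : Monad (Over x) where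
  toFunctor := liftOfFunctor T m
  η :=
    { app := fun f => Over.homMk (T.η.app f.left) (by
        dsimp
        show T.η.app f.left ≫ ((T : C ⥤ C).map f.hom ≫ m) = f.hom
        rw [← Category.assoc]
        erw [← T.η.naturality f.hom]
        dsimp
        rw [Category.assoc, h1, Category.comp_id])
      naturality := by
        intro f g u
        ext
        exact T.η.naturality u.left }
  μ :=
    { app := fun f => Over.homMk (T.μ.app f.left) (by
        dsimp
        show T.μ.app f.left ≫ ((T : C ⥤ C).map f.hom ≫ m) =
          (T : C ⥤ C).map ((T : C ⥤ C).map f.hom ≫ m) ≫ m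
        rw [← Category.assoc]
        erw [← T.μ.naturality f.hom]
        dsimp
        rw [Category.assoc, h2, ← Category.assoc, ← Functor.map_comp]
      )
      naturality := by
        intro f g u
        ext
        exact T.μ.naturality u.left }
  left_unit := by
    intro f
    ext
    exact T.left_unit f.left
  right_unit := by
    intro f
    ext
    exact T.right_unit f.left
  assoc := by
    intro f
    ext
    exact T.assoc f.left


namespace LiftedAux

variable (T : Monad C) {x : C} (m : (T : C ⥤ C).obj x ⟶ x)
    (h1 : T.η.app x ≫ m = 𝟙 x)
    (h2 : T.μ.app x ≫ m = (T : C ⥤ C).map m ≫ m)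

/-- underlying algebra -/
@[simps]
def toAlg (A : (liftedMonad T m h1 h2).Algebra) : Monad.Algebra T where
  A := A.A.left
  a := A.a.left
  unit := congrArg CommaMorphism.left A.unit
  assoc := congrArg CommaMorphism.left A.assoc

/-- forward functor -/
@[simps]
def fwd : (liftedMonad T m h1 h2).Algebra ⥤
    Over ({ A := x, a := m, unit := h1, assoc := h2 } : Monad.Algebra T) where
  obj A := Over.mk (Y := toAlg T m h1 h2 A)
    ({ f := A.A.hom, h := by exact (Over.w A.a).symm } : toAlg T m h1 h2 A ⟶ ({ A := x, a := m, unit := h1, assoc := h2 } : Monad.Algebra T))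
  map {A B} u := Over.homMk
    ({ f := u.f.left, h := congrArg CommaMorphism.left u.h } :
      toAlg T m h1 h2 A ⟶ toAlg T m h1 h2 B)
    (by ext; exact Over.w u.f)
  map_id A := by ext; rfl
  map_comp u v := by ext; rfl

/-- backward functor -/
@[simps]
def bwd : Over ({ A := x, a := m, unit := h1, assoc := h2 } : Monad.Algebra T) ⥤
    (liftedMonad T m h1 h2).Algebra where
  obj g :=
    { A := Over.mk g.hom.f
      a := Over.homMk g.left.a g.hom.h.symm
      unit := by ext; exact g.left.unit
      assoc := by ext; exact g.left.assoc }
  map {g g'} u :=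
    { f := Over.homMk u.left.f (congrArg Monad.Algebra.Hom.f (Over.w u))
      h := by ext; exact u.left.h }
  map_id g := by ext; rfl
  map_comp u v := by ext; rfl

end LiftedAux

/-- Given a monad `T` on `C` and a `T`-algebra structure `m : T x ⟶ x`, the category
of algebras for the lifted monad `T̃` on `C/x` is equivalent to the slice category of
`T`-algebras over the algebra `(x, m)`. -/
theorem liftedMonad_algebras_equiv_over (T : Monad C) {x : C}
    (m : (T : C ⥤ C).obj x ⟶ x)
    (h1 : T.η.app x ≫ m = 𝟙 x)
    (h2 : T.μ.app x ≫ m = (T : C ⥤ C).map m ≫ m) :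
    Nonempty ((liftedMonad T m h1 h2).Algebra ≌
      Over ({ A := x, a := m, unit := h1, assoc := h2 } : Monad.Algebra T)) := by
  exact ⟨CategoryTheory.Equivalence.mk (LiftedAux.fwd T m h1 h2) (LiftedAux.bwd T m h1 h2)
    (NatIso.ofComponents (fun A => Iso.refl _) (by intros; ext; erw [Category.comp_id, Category.id_comp]; rfl))
    (NatIso.ofComponents (fun g => Iso.refl _) (by intros; ext; erw [Category.comp_id, Category.id_comp]; rfl))⟩
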